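/- Let H be an infinite-dimensional complex Hilbert space and X ⊊ Y closed subspaces of infinite dimension and infinite codimension. Then there exists a closed subspace Z of H with infinite dimension and infinite codimension such that Z is orthogonal to X and Z is not orthogonal to Y. -/

import Mathlib

variable {H : Type} [NormedAddCommGroup H] [InnerProductSpace ℂ H] [CompleteSpace H]

/-- Membership in the Grassmannian `G_∞(H)`: closed subspaces whose dimension and
codimension are both infinite. -/
def inGinf (X : Submodule ℂ H) : Prop :=
  IsClosed (X : Set H) ∧ ¬ FiniteDimensional ℂ X ∧ ¬ FiniteDimensional ℂ Xᗮ

/-- `f` sends every pair of subspaces of `G_∞(H)` to an equivalent pair: some linear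
isometry of `H` maps one (unordered) pair onto the other. -/
def SendsPairsToEquiv (f : Submodule ℂ H → Submodule ℂ H) : Prop :=
  ∀ X Y : Submodule ℂ H, inGinf X → inGinf Y →
    ∃ L : H →ₗᵢ[ℂ] H,
      ({f X, f Y} : Set (Submodule ℂ H)) = {X.map L.toLinearMap, Y.map L.toLinearMap}

/-- for `X ⊊ Y` in `G_∞(H)` there exists `Z ∈ G_∞(H)` orthogonal to
`X` but not orthogonal to `Y`. -/
theorem stmt7 (hH : ¬ FiniteDimensional ℂ H)
    (X Y : Submodule ℂ H) (hX : inGinf X) (hY : inGinf Y) (hXY : X < Y) :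
    ∃ Z : Submodule ℂ H, inGinf Z ∧ Z.IsOrtho X ∧ ¬ Z.IsOrtho Y := by
  obtain ⟨hXc, hXi, hXci⟩ := hX
  haveI : CompleteSpace X := hXc.completeSpace_coe
  have hXX : Xᗮᗮ = X := Submodule.orthogonal_orthogonal X
  refine ⟨Xᗮ, ⟨Submodule.isClosed_orthogonal X, hXci, by rwa [hXX]⟩,
    Submodule.isOrtho_orthogonal_left X, ?_⟩
  intro hortho
  obtain ⟨y, hyY, hyX⟩ := SetLike.exists_of_lt hXY
  set p : H := (X.orthogonalProjectionOnto y : H) with hp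
  have hz : y - p ∈ Xᗮ := Submodule.sub_starProjection_mem_orthogonal (K := X) y
  have hne : y - p ≠ 0 := by
    intro h
    apply hyX
    rw [sub_eq_zero] at h
    rw [h]
    exact (X.orthogonalProjectionOnto y).2
  have key : (inner ℂ (y - p) y : ℂ) = 0 := Submodule.isOrtho_iff_inner_eq.mp hortho _ hz _ hyY
  have h1 : (inner ℂ (y - p) p : ℂ) = 0 := Submodule.isOrtho_iff_inner_eq.mp (Submodule.isOrtho_orthogonal_left X) _ hz _ (X.orthogonalProjectionOnto y).2
  have h2 : (inner ℂ (y - p) p : ℂ) + inner ℂ (y - p) (y - p) = 0 := by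
    rw [← inner_add_right]
    rw [show p + (y - p) = y by abel]
    exact key
  rw [h1, zero_add, inner_self_eq_zero] at h2
  exact hne h2
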